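/- Let P be a solution of the synaptic CME. Then for every integer 1 ≤ n0 ≤ N0 and every t ≥ 0, the time derivative of the upper tail of the marginal P_N satisfies the exact flux identity d/dt [ ∑_{n=n0}^{N0} P_N(n,t) ] = − κe · ∑_{o=0}^{C} (n0 − o) · P(n0, o, t); in particular, probability mass flows only from level n+1 to level n, never in the opposite direction. -/

import Mathlib

open Finset

/-- Right-hand side of the synaptic chemical master equation (CME) for state `(n,o)`
at time `t`.  Terms referring to out-of-range indices are set to zero. -/
noncomputable def cmeRHS (N0 C : ℕ) (κd κe : ℝ) (κa : ℝ → ℝ)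
    (P : ℕ → ℕ → ℝ → ℝ) (n o : ℕ) (t : ℝ) : ℝ :=
  -(κd * (o : ℝ) + κe * ((n : ℝ) - (o : ℝ)) + κa t * ((n : ℝ) - (o : ℝ)) * ((C : ℝ) - (o : ℝ)))
      * P n o t
  + (if o + 1 ≤ C then κd * ((o : ℝ) + 1) * P n (o + 1) t else 0)
  + (if n + 1 ≤ N0 then κe * ((n : ℝ) + 1 - (o : ℝ)) * P (n + 1) o t else 0)
  + (if 1 ≤ o then κa t * ((n : ℝ) - (o : ℝ) + 1) * ((C : ℝ) - (o : ℝ) + 1) * P n (o - 1) t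
     else 0)

/-- `P` solves the synaptic CME on `[0,∞)`. -/
def IsCMESolution (N0 C : ℕ) (κd κe : ℝ) (κa : ℝ → ℝ) (P : ℕ → ℕ → ℝ → ℝ) : Prop :=
  ∀ n, n ≤ N0 → ∀ o, o ≤ C → ∀ t : ℝ, 0 ≤ t →
    HasDerivAt (fun s => P n o s) (cmeRHS N0 C κd κe κa P n o t) t

/-- Marginal distribution of the total number of neurotransmitters:
`P_N(n,t) = ∑_{o=0}^{C} P(n,o,t)`. -/
noncomputable def margN (C : ℕ) (P : ℕ → ℕ → ℝ → ℝ) (n : ℕ) (t : ℝ) : ℝ :=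
  ∑ o ∈ Finset.range (C + 1), P n o t

/-- Marginal distribution of the number of occupied receptors:
`P_O(o,t) = ∑_{n=0}^{N0} P(n,o,t)`. -/
noncomputable def margO (N0 : ℕ) (P : ℕ → ℕ → ℝ → ℝ) (o : ℕ) (t : ℝ) : ℝ :=
  ∑ n ∈ Finset.range (N0 + 1), P n o t

/-- Binomial probability mass function `P_B(k; m, p)`. -/
noncomputable def binPMF (m : ℕ) (p : ℝ) (k : ℕ) : ℝ :=
  (m.choose k : ℝ) * p ^ k * (1 - p) ^ (m - k)

/-- Right-hand side of the CME truncated to the state set `S`: the entry for a state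
`(n,o) ∈ S` keeps the full diagonal term but only receives inflow from states in `S`. -/
noncomputable def truncRHS (N0 C : ℕ) (κd κe : ℝ) (κa : ℝ → ℝ)
    (S : Finset (ℕ × ℕ)) (Q : ℕ → ℕ → ℝ → ℝ) (n o : ℕ) (t : ℝ) : ℝ :=
  -(κd * (o : ℝ) + κe * ((n : ℝ) - (o : ℝ)) + κa t * ((n : ℝ) - (o : ℝ)) * ((C : ℝ) - (o : ℝ)))
      * Q n o t
  + (if o + 1 ≤ C ∧ (n, o + 1) ∈ S then κd * ((o : ℝ) + 1) * Q n (o + 1) t else 0)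
  + (if n + 1 ≤ N0 ∧ (n + 1, o) ∈ S then κe * ((n : ℝ) + 1 - (o : ℝ)) * Q (n + 1) o t else 0)
  + (if 1 ≤ o ∧ (n, o - 1) ∈ S then
      κa t * ((n : ℝ) - (o : ℝ) + 1) * ((C : ℝ) - (o : ℝ) + 1) * Q n (o - 1) t
     else 0)

/-- `Q` is the truncated solution on the state set `S` for `t ≥ tk`, with initial
condition `Q(tk) = P(tk)|_S`. -/
def IsTruncatedSolution (N0 C : ℕ) (κd κe : ℝ) (κa : ℝ → ℝ)
    (S : Finset (ℕ × ℕ)) (tk : ℝ) (P Q : ℕ → ℕ → ℝ → ℝ) : Prop :=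
  (∀ p ∈ S, Q p.1 p.2 tk = P p.1 p.2 tk) ∧
  (∀ p ∈ S, ∀ t : ℝ, tk ≤ t →
    HasDerivAt (fun s => Q p.1 p.2 s) (truncRHS N0 C κd κe κa S Q p.1 p.2 t) t)

/-- Telescoping sum in `o` for the dissociation terms. -/
lemma cme_telA (C : ℕ) (g : ℕ → ℝ) (hg0 : g 0 = 0) :
    ∑ o ∈ Finset.range (C + 1), (-(g o) + (if o + 1 ≤ C then g (o + 1) else 0)) = 0 := by
  have h1 : ∑ o ∈ Finset.range (C + 1), (if o + 1 ≤ C then g (o + 1) else 0)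
      = ∑ o ∈ Finset.range C, g (o + 1) := by
    rw [Finset.sum_range_succ, if_neg (by omega), add_zero]
    exact Finset.sum_congr rfl fun o ho =>
      if_pos (by simpa [Finset.mem_range] using Finset.mem_range.mp ho)
  have h2 : ∑ o ∈ Finset.range (C + 1), g o = ∑ o ∈ Finset.range C, g (o + 1) := by
    rw [Finset.sum_range_succ', hg0, add_zero]
  rw [Finset.sum_add_distrib, h1, Finset.sum_neg_distrib, h2, neg_add_cancel]

/-- Telescoping sum in `o` for the association terms. -/
lemma cme_telB (C : ℕ) (h T : ℕ → ℝ) (hC : h C = 0) (hT : ∀ o, T (o + 1) = h o) :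
    ∑ o ∈ Finset.range (C + 1), (-(h o) + (if 1 ≤ o then T o else 0)) = 0 := by
  have h1 : ∑ o ∈ Finset.range (C + 1), (if 1 ≤ o then T o else 0)
      = ∑ o ∈ Finset.range C, h o := by
    rw [Finset.sum_range_succ']
    simp [hT]
  have h2 : ∑ o ∈ Finset.range (C + 1), h o = ∑ o ∈ Finset.range C, h o := by
    rw [Finset.sum_range_succ, hC, add_zero]
  rw [Finset.sum_add_distrib, h1, Finset.sum_neg_distrib, h2, neg_add_cancel]

/-- Telescoping sum in `n` for the escape terms. -/
lemma cme_telN (a : ℕ) (g : ℕ → ℝ) :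
    ∀ b : ℕ, a ≤ b →
      ∑ n ∈ Finset.Icc a b, (-(g n) + (if n + 1 ≤ b then g (n + 1) else 0)) = -(g a) := by
  intro b
  induction b with
  | zero =>
      intro hab
      interval_cases a
      simp
  | succ b ih =>
      intro hab
      rcases Nat.lt_or_ge a (b + 1) with hlt | hge
      · have hab' : a ≤ b := by omega
        rw [Finset.sum_Icc_succ_top (by omega)]
        have hsplit : ∑ n ∈ Finset.Icc a b,
            (-(g n) + (if n + 1 ≤ b + 1 then g (n + 1) else 0))
            = (∑ n ∈ Finset.Icc a b, (-(g n) + (if n + 1 ≤ b then g (n + 1) else 0)))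
              + g (b + 1) := by
          rw [show (g (b+1) : ℝ) = ∑ n ∈ Finset.Icc a b, (if n = b then g (b+1) else 0) by
            rw [Finset.sum_ite_eq' (Finset.Icc a b) b (fun _ => g (b+1))]
            rw [if_pos (Finset.mem_Icc.mpr ⟨hab', le_refl b⟩)]]
          rw [← Finset.sum_add_distrib]
          refine Finset.sum_congr rfl fun n hn => ?_
          have hn' := Finset.mem_Icc.mp hn
          by_cases hnb : n = b
          · subst hnb
            rw [if_pos (by omega), if_neg (by omega), if_pos rfl]
            ring
          · rw [if_pos (by omega), if_pos (by omega), if_neg hnb]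
            ring
        rw [hsplit, ih hab', if_neg (by omega)]
        ring
      · have : a = b + 1 := by omega
        subst this
        rw [Finset.Icc_self, Finset.sum_singleton, if_neg (by omega)]
        ring

/-- Exact flux identity for the upper tail of the marginal `P_N`: for
`1 ≤ n0 ≤ N0`, the time derivative of `∑_{n=n0}^{N0} P_N(n,t)` equals
`−κe · ∑_{o=0}^{C} (n0 − o) · P(n0,o,t)`; probability mass flows only downwards in `n`. -/

theorem cme_margN_upper_tail_flux
    (N0 C : ℕ) (κd κe : ℝ) (κa : ℝ → ℝ)
    (hN0 : 1 ≤ N0) (hC : 1 ≤ C) (hκd : 0 ≤ κd) (hκe : 0 ≤ κe)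
    (hκa_cont : Continuous κa) (hκa : ∀ t : ℝ, 0 ≤ κa t)
    (P : ℕ → ℕ → ℝ → ℝ) (hP : IsCMESolution N0 C κd κe κa P) :
    ∀ n0 : ℕ, 1 ≤ n0 → n0 ≤ N0 → ∀ t : ℝ, 0 ≤ t →
      HasDerivAt (fun s => ∑ n ∈ Finset.Icc n0 N0, margN C P n s)
        (-(κe * ∑ o ∈ Finset.range (C + 1), ((n0 : ℝ) - (o : ℝ)) * P n0 o t)) t := by
  intro n0 hn01 hn0N t ht
  have key : ∀ n ∈ Finset.Icc n0 N0, HasDerivAt (fun s => margN C P n s)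
      (∑ o ∈ Finset.range (C + 1), cmeRHS N0 C κd κe κa P n o t) t := by
    intro n hn
    have hn' := Finset.mem_Icc.mp hn
    exact HasDerivAt.fun_sum fun o ho =>
      hP n hn'.2 o (by have := Finset.mem_range.mp ho; omega) t ht
  have hd := HasDerivAt.fun_sum key
  refine HasDerivAt.congr_deriv hd (Eq.symm ?_)
  -- it remains to compute the double sum of the RHS
  have hsplit : ∀ n ∈ Finset.Icc n0 N0, ∀ o ∈ Finset.range (C + 1),
      cmeRHS N0 C κd κe κa P n o t
      = (-(κd * (o : ℝ) * P n o t)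
          + (if o + 1 ≤ C then κd * ((o + 1 : ℕ) : ℝ) * P n (o + 1) t else 0))
        + (-(κa t * ((n : ℝ) - (o : ℝ)) * ((C : ℝ) - (o : ℝ)) * P n o t)
          + (if 1 ≤ o then
              κa t * ((n : ℝ) - (o : ℝ) + 1) * ((C : ℝ) - (o : ℝ) + 1) * P n (o - 1) t
             else 0))
        + (-(κe * ((n : ℝ) - (o : ℝ)) * P n o t)
          + (if n + 1 ≤ N0 then κe * (((n + 1 : ℕ) : ℝ) - (o : ℝ)) * P (n + 1) o t else 0)) := by
    intro n _ o _
    unfold cmeRHS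
    split_ifs <;> push_cast <;> ring
  rw [Finset.sum_congr rfl (fun n hn => Finset.sum_congr rfl (hsplit n hn))]
  have e1 : ∀ n ∈ Finset.Icc n0 N0,
      ∑ o ∈ Finset.range (C + 1),
        (-(κd * (o : ℝ) * P n o t)
          + (if o + 1 ≤ C then κd * ((o + 1 : ℕ) : ℝ) * P n (o + 1) t else 0)) = 0 := by
    intro n _
    exact cme_telA C (fun o => κd * (o : ℝ) * P n o t) (by simp)
  have e2 : ∀ n ∈ Finset.Icc n0 N0,
      ∑ o ∈ Finset.range (C + 1),
        (-(κa t * ((n : ℝ) - (o : ℝ)) * ((C : ℝ) - (o : ℝ)) * P n o t)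
          + (if 1 ≤ o then
              κa t * ((n : ℝ) - (o : ℝ) + 1) * ((C : ℝ) - (o : ℝ) + 1) * P n (o - 1) t
             else 0)) = 0 := by
    intro n _
    refine cme_telB C (fun o => κa t * ((n : ℝ) - (o : ℝ)) * ((C : ℝ) - (o : ℝ)) * P n o t)
      (fun o => κa t * ((n : ℝ) - (o : ℝ) + 1) * ((C : ℝ) - (o : ℝ) + 1) * P n (o - 1) t)
      (by simp) (fun o => by simp only [Nat.add_sub_cancel]; push_cast; ring)
  have e3 : ∀ o ∈ Finset.range (C + 1),
      ∑ n ∈ Finset.Icc n0 N0,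
        (-(κe * ((n : ℝ) - (o : ℝ)) * P n o t)
          + (if n + 1 ≤ N0 then κe * (((n + 1 : ℕ) : ℝ) - (o : ℝ)) * P (n + 1) o t else 0))
      = -(κe * ((n0 : ℝ) - (o : ℝ)) * P n0 o t) := by
    intro o _
    exact cme_telN n0 (fun n => κe * ((n : ℝ) - (o : ℝ)) * P n o t) N0 hn0N
  calc -(κe * ∑ o ∈ Finset.range (C + 1), ((n0 : ℝ) - (o : ℝ)) * P n0 o t)
      = ∑ o ∈ Finset.range (C + 1), -(κe * ((n0 : ℝ) - (o : ℝ)) * P n0 o t) := by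
        rw [Finset.mul_sum, ← Finset.sum_neg_distrib]
        exact Finset.sum_congr rfl fun o _ => by ring
    _ = ∑ o ∈ Finset.range (C + 1), ∑ n ∈ Finset.Icc n0 N0,
        (-(κe * ((n : ℝ) - (o : ℝ)) * P n o t)
          + (if n + 1 ≤ N0 then κe * (((n + 1 : ℕ) : ℝ) - (o : ℝ)) * P (n + 1) o t else 0)) :=
        (Finset.sum_congr rfl e3).symm
    _ = _ := by
        rw [Finset.sum_comm]
        refine Finset.sum_congr rfl fun n hn => ?_
        conv_rhs => rw [Finset.sum_add_distrib, Finset.sum_add_distrib]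
        rw [e1 n hn, e2 n hn, zero_add, zero_add]
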